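/- Let P and Q be forcing notions and κ a regular cardinal with κ ≥ ℵ*(P) (the Lindenbaum number of the set of conditions of P). If Q is κ-descending distributive, then the product forcing P × Q (ordered componentwise) is κ-descending distributive. -/

import Mathlib

universe u

/-- A subset `D` of a forcing notion is *open dense* if it is downward closed and
for every condition `p` there is `q ∈ D` with `q ≤ p`. -/
def IsOpenDense {P : Type*} [Preorder P] (D : Set P) : Prop :=
  (∀ p ∈ D, ∀ q, q ≤ p → q ∈ D) ∧ ∀ p : P, ∃ q ∈ D, q ≤ p

/-- A forcing notion `P` is `κ`-descending distributive if for every decreasing sequence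
`(D_α)_{α<κ}` of open dense subsets, the intersection `⋂_{α<κ} D_α` is open dense. -/
def DescDist (P : Type*) [Preorder P] (κ : Cardinal) : Prop :=
  ∀ D : Ordinal → Set P,
    (∀ α, α < κ.ord → IsOpenDense (D α)) →
    (∀ α β : Ordinal, α ≤ β → β < κ.ord → D β ⊆ D α) →
    IsOpenDense (⋂ α ∈ Set.Iio κ.ord, D α)

/-- The Lindenbaum number `ℵ*(X)`: the least ordinal `α` such that `|α| ≤* |X|` fails,
i.e. such that `α ≠ 0` and there is no surjection from `X` onto `α`. -/
noncomputable def lindenbaumOrd (X : Type u) : Ordinal.{u} :=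
  sInf {α : Ordinal.{u} | ¬ (α = 0 ∨ ∃ f : X → α.ToType, Function.Surjective f)}

/-- With choice, the Lindenbaum number of a nonempty set `X` is at least `(#X)⁺`. -/
theorem succ_le_lindenbaumOrd (X : Type u) [Nonempty X] :
    (Order.succ (Cardinal.mk X)).ord ≤ lindenbaumOrd X := by
  have hne : {α : Ordinal.{u} | ¬ (α = 0 ∨ ∃ f : X → α.ToType, Function.Surjective f)}.Nonempty := by
    refine ⟨(Order.succ (Cardinal.mk X)).ord, ?_⟩
    rintro (h0 | ⟨f, hf⟩)
    · have := Cardinal.ord_eq_zero.mp h0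
      simp [Cardinal.succ_ne_zero] at this
    · have hle : Cardinal.mk ((Order.succ (Cardinal.mk X)).ord.ToType) ≤ Cardinal.mk X :=
        Cardinal.mk_le_of_surjective hf
      rw [Cardinal.mk_toType, Cardinal.card_ord] at hle
      exact absurd hle (not_le.mpr (Order.lt_succ _))
  refine le_csInf hne ?_
  intro α hα
  by_contra hlt
  push_neg at hlt
  apply hα
  rcases eq_or_ne α 0 with h0 | h0
  · exact Or.inl h0
  · refine Or.inr ?_
    have hcard : α.card ≤ Cardinal.mk X :=
      Order.lt_succ_iff.mp (Cardinal.lt_ord.mp hlt)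
    have : Cardinal.mk α.ToType ≤ Cardinal.mk X := by rwa [Cardinal.mk_toType]
    obtain ⟨i⟩ := this
    have : Nonempty α.ToType := Ordinal.toType_nonempty_iff_ne_zero.mpr h0
    exact ⟨Function.invFun i, Function.invFun_surjective i.injective⟩

theorem statement11 {P Q : Type u} [PartialOrder P] [OrderTop P]
    [PartialOrder Q] [OrderTop Q]
    (κ : Cardinal.{u}) (hκ : κ.IsRegular) (hP : (lindenbaumOrd P).card ≤ κ)
    (hQ : DescDist Q κ) :
    DescDist (P × Q) κ := by
  have : Nonempty P := ⟨⊤⟩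
  have hPκ : Cardinal.mk P < κ := by
    have h1 := Ordinal.card_le_card (succ_le_lindenbaumOrd P)
    rw [Cardinal.card_ord] at h1
    exact lt_of_lt_of_le (Order.lt_succ _) (h1.trans hP)
  intro D hOD hdec
  constructor
  · rintro pq hpq pq' hle
    simp only [Set.mem_iInter] at hpq ⊢
    intro α hα
    exact (hOD α hα).1 pq (hpq α hα) pq' hle
  · rintro ⟨p₀, q₀⟩
    set E : Ordinal → Set Q := fun α => {q | ∃ p ≤ p₀, (p, q) ∈ D α} with hE
    have hEod : ∀ α, α < κ.ord → IsOpenDense (E α) := by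
      intro α hα
      constructor
      · rintro q ⟨p, hp, hpq⟩ q' hq'
        exact ⟨p, hp, (hOD α hα).1 _ hpq (p, q') ⟨le_refl p, hq'⟩⟩
      · intro q
        obtain ⟨⟨p', q'⟩, hmem, hle⟩ := (hOD α hα).2 (p₀, q)
        exact ⟨q', ⟨p', hle.1, hmem⟩, hle.2⟩
    have hEdec : ∀ α β : Ordinal, α ≤ β → β < κ.ord → E β ⊆ E α := by
      rintro α β hab hβ q ⟨p, hp, hpq⟩
      exact ⟨p, hp, hdec α β hab hβ hpq⟩
    obtain ⟨q, hq, hqle⟩ := (hQ E hEod hEdec).2 q₀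
    simp only [Set.mem_iInter, hE, Set.mem_setOf_eq] at hq
    choose f hf1 hf2 using fun (α : Set.Iio κ.ord) => hq α.1 α.2
    -- pigeonhole: some p is hit cofinally often
    have hpig : ∃ p : P, ∀ β : Ordinal, β < κ.ord →
        ∃ α : Set.Iio κ.ord, β ≤ α.1 ∧ f α = p := by
      by_contra hcon
      push_neg at hcon
      choose g hg1 hg2 using hcon
      have hsup : (⨆ p, g p) < κ.ord :=
        Cardinal.iSup_lt_ord_of_isRegular hκ hPκ hg1
      set s : Set.Iio κ.ord := ⟨⨆ p, g p, hsup⟩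
      have := hg2 (f s) s (le_ciSup (Ordinal.bddAbove_range _) (f s))
      exact this rfl
    obtain ⟨p, hp⟩ := hpig
    have h0 : (0 : Ordinal) < κ.ord := by
      rw [← Cardinal.ord_zero]
      exact Cardinal.ord_lt_ord.mpr hκ.pos
    obtain ⟨α0, _, hfa0⟩ := hp 0 h0
    have hple : p ≤ p₀ := hfa0 ▸ hf1 α0
    refine ⟨(p, q), ?_, hple, hqle⟩
    simp only [Set.mem_iInter]
    intro β hβ
    obtain ⟨α, hβα, hfa⟩ := hp β hβ
    exact hdec β α.1 hβα α.2 (hfa ▸ hf2 α)
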